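/- Let P_n be the monic polynomials from the recurrence xP_n = P_{n+1} + γ_{n−1}P_{n−1} with γ_0 = 1−√(1−r²), γ_1 = √(1−r²)(1−√(1−r²))/2, γ_n = r²/4 for n ≥ 2. Then the formal power series Q(x,z) = Σ_{n≥0} P_n(x) z^n satisfies (4 − 4xz + r²z²) Q(x,z) = 4 + (r² − 4 + 4√(1−r²)) z² + (2 − 2√(1−r²) − r²) x z³. -/

import Mathlib

open Real PowerSeries

theorem konno_polynomials_generating_function (r : ℝ) (hr0 : 0 < r) (hr1 : r < 1)
    (γ : ℕ → ℝ)
    (hγ0 : γ 0 = 1 - Real.sqrt (1 - r^2))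
    (hγ1 : γ 1 = Real.sqrt (1 - r^2) * (1 - Real.sqrt (1 - r^2)) / 2)
    (hγ : ∀ n, 2 ≤ n → γ n = r^2 / 4)
    (P : ℕ → ℝ → ℝ)
    (hP0 : ∀ x, P 0 x = 1)
    (hP1 : ∀ x, P 1 x = x)
    (hrec : ∀ n x, P (n + 2) x = x * P (n + 1) x - γ n * P n x) :
    ∀ x : ℝ,
      (PowerSeries.C (R := ℝ) 4 - PowerSeries.C (R := ℝ) (4 * x) * PowerSeries.X
          + PowerSeries.C (R := ℝ) (r^2) * PowerSeries.X ^ 2)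
        * PowerSeries.mk (fun n => P n x)
      = PowerSeries.C (R := ℝ) 4
        + PowerSeries.C (R := ℝ) (r^2 - 4 + 4 * Real.sqrt (1 - r^2)) * PowerSeries.X ^ 2
        + PowerSeries.C (R := ℝ) ((2 - 2 * Real.sqrt (1 - r^2) - r^2) * x) * PowerSeries.X ^ 3 := by
  intro x
  have hs : Real.sqrt (1 - r^2) ^ 2 = 1 - r^2 := by
    rw [sq_sqrt]; nlinarith
  set s := Real.sqrt (1 - r^2) with hsdef
  have key : (PowerSeries.C (R := ℝ) 4 - PowerSeries.C (R := ℝ) (4 * x) * PowerSeries.X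
          + PowerSeries.C (R := ℝ) (r^2) * PowerSeries.X ^ 2)
        * PowerSeries.mk (fun n => P n x)
      = PowerSeries.C (R := ℝ) 4 * PowerSeries.mk (fun n => P n x)
        - PowerSeries.C (R := ℝ) (4 * x) * (PowerSeries.mk (fun n => P n x) * PowerSeries.X ^ 1)
        + PowerSeries.C (R := ℝ) (r^2) * (PowerSeries.mk (fun n => P n x) * PowerSeries.X ^ 2) := by
    ring
  rw [key]
  ext n
  simp only [map_add, map_sub, PowerSeries.coeff_C_mul, PowerSeries.coeff_mul_X_pow',
    PowerSeries.coeff_mk, PowerSeries.coeff_C]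
  match n with
  | 0 => simp [hP0]
  | 1 => simp [hP0, hP1]
  | 2 =>
    have h2 := hrec 0 x
    rw [hγ0, hP0, hP1] at h2
    norm_num [h2, hP1, hP0]
    ring
  | 3 =>
    have h2 := hrec 0 x
    rw [hγ0, hP0, hP1] at h2
    have h3 := hrec 1 x
    rw [hγ1, hP1, h2] at h3
    norm_num [h3, h2, hP1]
    linear_combination 2 * x * hs
  | (n + 4) =>
    have h := hrec (n + 2) x
    rw [hγ (n + 2) (by omega)] at h
    simp only [show n + 4 - 1 = n + 3 from rfl, show n + 4 - 2 = n + 2 from rfl,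
      show n + 4 - 3 = n + 1 from rfl, show n + 2 + 2 = n + 4 from rfl,
      show n + 2 + 1 = n + 3 from rfl] at h ⊢
    norm_num [h]
    ring
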